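/- Let K be a field, let (a,b) ∈ ℤ² with (a,b) ≠ (0,0), and let f₁, f₂ ∈ K⟨x,y,z⟩ be bihomogeneous with respect to the (a,b)-degree, i.e., a·deg_x w + b·deg_y w is the same for all monomials w of f₁, and likewise for f₂. If f₁ and f₂ are algebraically dependent over z, i.e., there exists a nonzero polynomial v(u₁,u₂,z) ∈ K⟨u₁,u₂,z⟩ with v(f₁,f₂,z) = 0, then deg_{(a,b)} f₁ and deg_{(a,b)} f₂ are either both nonnegative or both nonpositive. -/

import Mathlib

open MonoidAlgebra

noncomputable section

/-- The free associative algebra `K⟨x,y,z⟩` (also serving as `K⟨u₁,u₂,z⟩`);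
`x` is letter `0`, `y` is letter `1`, `z` is letter `2`. -/
abbrev FA (K : Type) [Field K] := MonoidAlgebra K (FreeMonoid (Fin 3))

variable (K : Type) [Field K]

/-- The generators `x = Xv 0`, `y = Xv 1`, `z = Xv 2`. -/
def Xv (i : Fin 3) : FA K := MonoidAlgebra.of K (FreeMonoid (Fin 3)) (FreeMonoid.of i)

/-- The substitution homomorphism sending the generators to `f 0, f 1, f 2`. -/
def subst (f : Fin 3 → FA K) : FA K →ₐ[K] FA K :=
  MonoidAlgebra.lift K (FA K) (FreeMonoid (Fin 3)) (FreeMonoid.lift f)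

/-- The `(a,b)`-degree of a monomial `w`: `a·deg_x w + b·deg_y w`. -/
def abDeg (a b : ℤ) (w : FreeMonoid (Fin 3)) : ℤ :=
  a * (FreeMonoid.toList w).count 0 + b * (FreeMonoid.toList w).count 1

namespace ZZ
open List

variable {α : Type*} [DecidableEq α]

/-- rewrite map replacing block `x ++ S` by the two blocks `x`, `S`. -/
def rw2 (x S : List α) (l : List (List α)) : List (List α) :=
  l.flatMap fun b => if b = x ++ S then [x, S] else [b]

lemma rw2_cons (x S : List α) (b t) :
    rw2 x S (b :: t) = (if b = x ++ S then [x, S] else [b]) ++ rw2 x S t := by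
  simp [rw2]

lemma rw2_flatten (x S : List α) : ∀ l : List (List α), (rw2 x S l).flatten = l.flatten
  | [] => rfl
  | b :: t => by
    rw [rw2_cons, flatten_append, rw2_flatten x S t, flatten_cons]
    by_cases h : b = x ++ S
    · subst h; simp
    · simp [h]

lemma rw2_mem {x S : List α} :
    ∀ l, (∀ b ∈ l, b = x ∨ b = x ++ S) → ∀ b ∈ rw2 x S l, b = x ∨ b = S := by
  intro l hl b hb
  simp only [rw2, mem_flatMap] at hb
  obtain ⟨c, hc, hbc⟩ := hb
  by_cases h : c = x ++ S
  · rw [if_pos h] at hbc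
    simp only [mem_cons, mem_singleton, not_mem_nil, or_false] at hbc
    rcases hbc with rfl | rfl
    · exact Or.inl rfl
    · exact Or.inr rfl
  · rw [if_neg h] at hbc
    rcases hl c hc with rfl | rfl
    · simp_all
    · exact absurd rfl h

lemma rw2_head {x S c : List α} (u : List (List α)) (hc : c = x ∨ c = x ++ S) :
    ∃ w, rw2 x S (c :: u) = x :: w := by
  rw [rw2_cons]
  by_cases h : c = x ++ S
  · exact ⟨S :: rw2 x S u, by rw [if_pos h]; rfl⟩
  · rcases hc with h1 | h1
    · exact ⟨rw2 x S u, by rw [if_neg h, h1]; rfl⟩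
    · exact absurd h1 h

lemma decode {x S : List α} (hSx : S ≠ x) :
    ∀ l₁ l₂ : List (List α), (∀ b ∈ l₁, b = x ∨ b = x ++ S) →
      (∀ b ∈ l₂, b = x ∨ b = x ++ S) → rw2 x S l₁ = rw2 x S l₂ → l₁ = l₂ := by
  intro l₁
  induction l₁ with
  | nil =>
    intro l₂ _ h₂ hr
    cases l₂ with
    | nil => rfl
    | cons b t =>
      exfalso
      obtain ⟨w, hw⟩ := rw2_head t (h₂ b (mem_cons_self))
      rw [← hr] at hw
      exact (List.cons_ne_nil _ _) hw.symm
  | cons b t ih =>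
    intro l₂ h₁ h₂ hr
    cases l₂ with
    | nil =>
      exfalso
      obtain ⟨w, hw⟩ := rw2_head t (h₁ b (mem_cons_self))
      rw [hr] at hw
      exact (List.cons_ne_nil _ _) hw.symm
    | cons b' t' =>
      rw [rw2_cons, rw2_cons] at hr
      by_cases hb : b = x ++ S <;> by_cases hb' : b' = x ++ S
      · rw [if_pos hb, if_pos hb'] at hr
        simp only [cons_append, nil_append, cons.injEq] at hr
        have := ih t' (fun c hc => h₁ c (mem_cons_of_mem _ hc))
          (fun c hc => h₂ c (mem_cons_of_mem _ hc)) hr.2.2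
        rw [hb, hb', this]
      · rw [if_pos hb, if_neg hb'] at hr
        have hbx : b' = x := (h₂ b' (mem_cons_self)).resolve_right hb'
        subst hbx
        simp only [cons_append, nil_append, cons.injEq] at hr
        -- hr : x = b' ∧ S :: rw2 x S t = rw2 x S t'
        exfalso
        cases t' with
        | nil => exact (List.cons_ne_nil _ _) hr.2
        | cons c u =>
          obtain ⟨w, hw⟩ := rw2_head u (h₂ c (mem_cons_of_mem _ (mem_cons_self)))
          rw [hw] at hr
          exact hSx (List.cons_eq_cons.mp hr.2).1
      · rw [if_neg hb, if_pos hb'] at hr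
        have hbx : b = x := (h₁ b (mem_cons_self)).resolve_right hb
        subst hbx
        simp only [cons_append, nil_append, cons.injEq] at hr
        exfalso
        cases t with
        | nil => exact (List.cons_ne_nil _ _) hr.2.symm
        | cons c u =>
          obtain ⟨w, hw⟩ := rw2_head u (h₁ c (mem_cons_of_mem _ (mem_cons_self)))
          rw [hw] at hr
          exact hSx ((List.cons_eq_cons.mp hr.2).1).symm
      · rw [if_neg hb, if_neg hb'] at hr
        simp only [cons_append, nil_append, cons.injEq] at hr
        have := ih t' (fun c hc => h₁ c (mem_cons_of_mem _ hc))
          (fun c hc => h₂ c (mem_cons_of_mem _ hc)) hr.2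
        rw [hr.1, this]


lemma rewriteStep {n : ℕ}
    (ih : ∀ x' y' : List α, x'.length + y'.length ≤ n → x' ≠ [] → y' ≠ [] →
      ∀ l₁ l₂ : List (List α), (∀ b ∈ l₁, b = x' ∨ b = y') → (∀ b ∈ l₂, b = x' ∨ b = y') →
      l₁.flatten = l₂.flatten → l₁ = l₂ ∨ x' ++ y' = y' ++ x')
    {x S : List α} (hx : x ≠ []) (hS : S ≠ []) (hn : x.length + S.length ≤ n)
    {l₁ l₂ : List (List α)} (h₁ : ∀ b ∈ l₁, b = x ∨ b = x ++ S)
    (h₂ : ∀ b ∈ l₂, b = x ∨ b = x ++ S) (hf : l₁.flatten = l₂.flatten) :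
    l₁ = l₂ ∨ x ++ (x ++ S) = (x ++ S) ++ x := by
  by_cases hSx : S = x
  · subst hSx
    right
    simp [List.append_assoc]
  · rcases ih x S hn hx hS (rw2 x S l₁) (rw2 x S l₂) (rw2_mem l₁ h₁) (rw2_mem l₂ h₂)
      (by rw [rw2_flatten, rw2_flatten]; exact hf) with h | h
    · exact Or.inl (decode hSx l₁ l₂ h₁ h₂ h)
    · right
      rw [List.append_assoc, ← h, ← List.append_assoc]

lemma two_code : ∀ (n : ℕ) (x y : List α), x.length + y.length ≤ n → x ≠ [] → y ≠ [] →
    ∀ l₁ l₂ : List (List α), (∀ b ∈ l₁, b = x ∨ b = y) → (∀ b ∈ l₂, b = x ∨ b = y) →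
    l₁.flatten = l₂.flatten → l₁ = l₂ ∨ x ++ y = y ++ x := by
  intro n
  induction n with
  | zero =>
    intro x y hn hx _
    exfalso
    cases x with
    | nil => exact hx rfl
    | cons a t => simp at hn
  | succ n ihn =>
    intro x y hn hx hy l₁
    induction l₁ with
    | nil =>
      intro l₂ _ h₂ hf
      left
      cases l₂ with
      | nil => rfl
      | cons b t =>
        exfalso
        simp only [flatten_nil, flatten_cons] at hf
        rcases append_eq_nil_iff.mp hf.symm with ⟨hb, -⟩
        rcases h₂ b (mem_cons_self) with rfl | rfl
        · exact hx hb
        · exact hy hb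
    | cons b₁ t₁ ihl =>
      intro l₂ h₁ h₂ hf
      cases l₂ with
      | nil =>
        exfalso
        simp only [flatten_cons, flatten_nil] at hf
        rcases append_eq_nil_iff.mp hf with ⟨hb, -⟩
        rcases h₁ b₁ (mem_cons_self) with rfl | rfl
        · exact hx hb
        · exact hy hb
      | cons b₂ t₂ =>
        by_cases hb : b₁ = b₂
        · subst hb
          simp only [flatten_cons] at hf
          rcases ihl t₂ (fun c hc => h₁ c (mem_cons_of_mem _ hc))
            (fun c hc => h₂ c (mem_cons_of_mem _ hc)) (List.append_cancel_left hf) with h | h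
          · exact Or.inl (by rw [h])
          · exact Or.inr h
        · -- heads differ
          have hxy : x ≠ y := by
            rintro rfl
            rcases h₁ b₁ (mem_cons_self) with rfl | rfl <;>
              rcases h₂ b₂ (mem_cons_self) with h' | h' <;> exact hb h'.symm
          have hpx : x <+: (b₁ :: t₁).flatten ∧ y <+: (b₁ :: t₁).flatten := by
            have p1 : b₁ <+: (b₁ :: t₁).flatten := by
              simp only [flatten_cons]; exact prefix_append _ _
            have p2 : b₂ <+: (b₁ :: t₁).flatten := by
              rw [hf]; simp only [flatten_cons]; exact prefix_append _ _
            rcases h₁ b₁ (mem_cons_self) with rfl | rfl <;>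
              rcases h₂ b₂ (mem_cons_self) with h' | h'
            · exact absurd h'.symm hb
            · exact ⟨p1, h' ▸ p2⟩
            · exact ⟨h' ▸ p2, p1⟩
            · exact absurd h'.symm hb
          rcases Nat.le_total x.length y.length with hlen | hlen
          · obtain ⟨S, hSy⟩ := prefix_of_prefix_length_le hpx.1 hpx.2 hlen
            have hS : S ≠ [] := by
              rintro rfl
              exact hxy (by rw [← hSy, List.append_nil])
            have hn' : x.length + S.length ≤ n := by
              have : x.length + S.length = y.length := by
                rw [← hSy]; simp
              have hx1 : 1 ≤ x.length := by
                cases x with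
                | nil => exact absurd rfl hx
                | cons a t => simp
              omega
            rcases rewriteStep ihn hx hS hn' (by rw [← hSy] at h₁; exact h₁)
              (by rw [← hSy] at h₂; exact h₂) hf with h | h
            · exact Or.inl h
            · right; rw [← hSy]; exact h
          · obtain ⟨S, hSy⟩ := prefix_of_prefix_length_le hpx.2 hpx.1 hlen
            have hS : S ≠ [] := by
              rintro rfl
              exact hxy (by rw [← hSy, List.append_nil])
            have hn' : y.length + S.length ≤ n := by
              have : y.length + S.length = x.length := by
                rw [← hSy]; simp
              have hy1 : 1 ≤ y.length := by
                cases y with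
                | nil => exact absurd rfl hy
                | cons a t => simp
              omega
            have h₁' : ∀ b ∈ b₁ :: t₁, b = y ∨ b = y ++ S := by
              intro c hc; rcases h₁ c hc with h' | h'
              · exact Or.inr (by rw [h', ← hSy])
              · exact Or.inl h'
            have h₂' : ∀ b ∈ b₂ :: t₂, b = y ∨ b = y ++ S := by
              intro c hc; rcases h₂ c hc with h' | h'
              · exact Or.inr (by rw [h', ← hSy])
              · exact Or.inl h'
            rcases rewriteStep ihn hy hS hn' h₁' h₂' hf with h | h
            · exact Or.inl h
            · right; rw [← hSy]; exact h.symm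

lemma comm_wt (ω : List α → ℤ) (hω : ∀ u v : List α, ω (u ++ v) = ω u + ω v) :
    ∀ (n : ℕ) (x y : List α), x.length + y.length ≤ n → x ++ y = y ++ x →
      ω x * y.length = ω y * x.length := by
  have hω0 : ω [] = 0 := by
    have := hω [] []
    simp at this
    omega
  intro n
  induction n with
  | zero =>
    intro x y hn _
    have hx : x = [] := by cases x with
      | nil => rfl
      | cons a t => simp at hn
    have hy : y = [] := by cases y with
      | nil => rfl
      | cons a t => simp at hn
    subst hx; subst hy; simp
  | succ n ihn =>
    intro x y hn hc
    rcases eq_or_ne x [] with rfl | hx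
    · simp [hω0]
    rcases eq_or_ne y [] with rfl | hy
    · simp [hω0]
    have hx1 : 1 ≤ x.length := by
      cases x with
      | nil => exact absurd rfl hx
      | cons a t => simp
    have hy1 : 1 ≤ y.length := by
      cases y with
      | nil => exact absurd rfl hy
      | cons a t => simp
    have step : ∀ s t : List α, 1 ≤ s.length → s.length + t.length ≤ n + 1 →
        s.length ≤ t.length → s ++ t = t ++ s → ω s * t.length = ω t * s.length := by
      intro s t hs1 hst hle hcomm
      have hps : s <+: s ++ t := prefix_append _ _
      have hpt : t <+: s ++ t := by rw [hcomm]; exact prefix_append _ _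
      obtain ⟨z, hz⟩ := prefix_of_prefix_length_le hps hpt hle
      -- hz : s ++ z = t
      have hcz : s ++ z = z ++ s := by
        have : s ++ (s ++ z) = (s ++ z) ++ s := by rw [hz, hcomm]
        rw [List.append_assoc] at this
        exact List.append_cancel_left this
      have hlenz : s.length + z.length ≤ n := by
        have : s.length + z.length = t.length := by rw [← hz]; simp
        omega
      have hIH := ihn s z hlenz hcz
      have hωt : ω t = ω s + ω z := by rw [← hz, hω]
      have hlt : (t.length : ℤ) = s.length + z.length := by
        rw [← hz]; push_cast [List.length_append]; ring
      rw [hωt, hlt]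
      ring_nf
      ring_nf at hIH
      linarith
    rcases Nat.le_total x.length y.length with hle | hle
    · exact step x y hx1 hn hle hc
    · exact (step y x hy1 (by omega) hle hc.symm).symm


section Fin3
-- weight function
def wt (a b : ℤ) (l : List (Fin 3)) : ℤ := a * l.count 0 + b * l.count 1

lemma wt_append (a b : ℤ) (u v : List (Fin 3)) : wt a b (u ++ v) = wt a b u + wt a b v := by
  simp [wt, List.count_append]; ring

lemma wt_filter (a b : ℤ) (l : List (Fin 3)) :
    wt a b (l.filter (fun i => i ≠ 2)) = wt a b l := by
  unfold wt
  rw [List.count_filter, List.count_filter] <;> simp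

lemma wt_flatten (a b : ℤ) : ∀ L : List (List (Fin 3)), wt a b L.flatten = (L.map (wt a b)).sum
  | [] => by simp [wt]
  | u :: t => by
    simp only [List.flatten_cons, wt_append, List.map_cons, List.sum_cons, wt_flatten a b t]

-- the only letters are 0, 1, 2
lemma fin3_cases : ∀ i : Fin 3, i = 0 ∨ i = 1 ∨ i = 2 := by decide

/-- the alignment lemma: factorizations with the same `z`-free block sequence agree. -/
lemma align (W : Fin 3 → List (Fin 3)) (hW2 : W 2 = [2])
    (h0 : ∀ i : Fin 3, i ≠ 2 → ∃ x ∈ W i, x ≠ 2) :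
    ∀ (n : ℕ) (m m' : List (Fin 3)), m.length ≤ n →
      (m.map W).flatten = (m'.map W).flatten →
      m.filter (fun i => i ≠ 2) = m'.filter (fun i => i ≠ 2) → m = m' := by
  have Wne : ∀ i : Fin 3, W i ≠ [] := by
    intro i
    rcases eq_or_ne i 2 with rfl | hi
    · rw [hW2]; simp
    · obtain ⟨x, hx, -⟩ := h0 i hi
      intro h; rw [h] at hx; simp at hx
  have flat_nil : ∀ m : List (Fin 3), (m.map W).flatten = [] → m = [] := by
    intro m hm
    cases m with
    | nil => rfl
    | cons c t =>
      exfalso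
      rw [List.map_cons, List.flatten_cons, List.append_eq_nil_iff] at hm
      exact Wne c hm.1
  set e2 : Fin 3 → Bool := fun i => i == 2 with he2
  have htake : ∀ l : List (Fin 3), l.takeWhile e2 = List.replicate (l.takeWhile e2).length 2 := by
    intro l
    apply List.eq_replicate_of_mem
    intro x hx
    have := List.mem_takeWhile_imp hx
    simpa [he2] using this
  have tw_stop : ∀ u v : List (Fin 3), (∃ x ∈ u, e2 x = false) →
      (u ++ v).takeWhile e2 = u.takeWhile e2 := by
    intro u v hu
    rw [List.takeWhile_append]
    rw [if_neg]
    intro hlen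
    have hu' : u.takeWhile e2 = u := (List.takeWhile_prefix e2).eq_of_length hlen
    obtain ⟨x, hx, hx2⟩ := hu
    rw [← hu'] at hx
    have := List.mem_takeWhile_imp hx
    simp [this] at hx2
  have hdw : ∀ (l : List (Fin 3)) (h : Fin 3) (r : List (Fin 3)),
      l.dropWhile e2 = h :: r → h ≠ 2 := by
    intro l
    induction l with
    | nil => intro h r hl; simp at hl
    | cons a t ih =>
      intro h r hl
      rw [List.dropWhile_cons] at hl
      cases hpa : e2 a with
      | true => rw [hpa] at hl; simp at hl; exact ih _ _ hl
      | false =>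
        rw [hpa] at hl
        simp at hl
        rcases hl with ⟨rfl, -⟩
        simpa [he2] using hpa
  intro n
  induction n with
  | zero =>
    intro m m' hlen hf _
    have hm : m = [] := List.length_eq_zero_iff.mp (Nat.le_zero.mp hlen)
    subst hm
    exact (flat_nil m' (by simpa using hf.symm)).symm
  | succ n ihn =>
    intro m m' hlen hf hfil
    rcases hA : m.dropWhile e2 with _ | ⟨h, r⟩
    · -- m is all 2's
      have hm : m = List.replicate (m.takeWhile e2).length 2 := by
        conv_lhs => rw [← List.takeWhile_append_dropWhile (p := e2) (l := m)]
        rw [hA, List.append_nil]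
        exact htake m
      have hfm : m.filter (fun i => i ≠ 2) = [] := by
        rw [hm]
        simp
      have hm'all : ∀ x ∈ m', x = 2 := by
        intro x hx
        have := List.filter_eq_nil_iff.mp (hfil ▸ hfm) x hx
        simpa using this
      have hm' : m' = List.replicate m'.length 2 := List.eq_replicate_of_mem hm'all
      have hlenf : ((m.map W).flatten).length = ((m'.map W).flatten).length := by rw [hf]
      rw [hm, hm'] at hlenf
      simp [List.map_replicate, hW2] at hlenf
      rw [hm, hm', hlenf]
    · -- m = 2^k ++ h :: r with h ≠ 2
      have hh2 : h ≠ 2 := hdw m h r hA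
      set k := (m.takeWhile e2).length with hk
      have hm : m = List.replicate k 2 ++ h :: r := by
        conv_lhs => rw [← List.takeWhile_append_dropWhile (p := e2) (l := m)]
        rw [hA, htake m, ← hk]
      have hfm : m.filter (fun i => i ≠ 2) = h :: r.filter (fun i => i ≠ 2) := by
        rw [hm]
        simp [List.filter_append, hh2]
      -- m' also has a non-2 letter
      rcases hA' : m'.dropWhile e2 with _ | ⟨h', r'⟩
      · exfalso
        have hm'2 : m' = List.replicate (m'.takeWhile e2).length 2 := by
          conv_lhs => rw [← List.takeWhile_append_dropWhile (p := e2) (l := m')]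
          rw [hA', List.append_nil]
          exact htake m'
        have : m'.filter (fun i => i ≠ 2) = [] := by rw [hm'2]; simp
        rw [hfil, this] at hfm
        exact List.cons_ne_nil _ _ hfm.symm
      · have hh2' : h' ≠ 2 := hdw m' h' r' hA'
        set k' := (m'.takeWhile e2).length with hk'
        have hm' : m' = List.replicate k' 2 ++ h' :: r' := by
          conv_lhs => rw [← List.takeWhile_append_dropWhile (p := e2) (l := m')]
          rw [hA', htake m', ← hk']
        have hfm' : m'.filter (fun i => i ≠ 2) = h' :: r'.filter (fun i => i ≠ 2) := by
          rw [hm']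
          simp [List.filter_append, hh2']
        rw [hfm, hfm'] at hfil
        have hhh : h = h' := by injection hfil
        have hfilr : r.filter (fun i => i ≠ 2) = r'.filter (fun i => i ≠ 2) := by
          injection hfil
        subst hhh
        -- flatten decompositions
        have hfW : (m.map W).flatten = List.replicate k 2 ++ (W h ++ (r.map W).flatten) := by
          rw [hm]
          simp [List.map_append, List.flatten_append, List.map_replicate, hW2]
        have hfW' : (m'.map W).flatten = List.replicate k' 2 ++ (W h ++ (r'.map W).flatten) := by
          rw [hm']
          simp [List.map_append, List.flatten_append, List.map_replicate, hW2]
        have hWh : ∃ x ∈ W h, e2 x = false := by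
          obtain ⟨x, hx, hx2⟩ := h0 h hh2
          exact ⟨x, hx, by simpa [he2] using hx2⟩
        -- compare leading 2-counts
        have hrep : ∀ (j : ℕ) (a : Fin 3), a ∈ List.replicate j 2 → e2 a = true := by
          intro j a ha
          rw [List.eq_of_mem_replicate ha]
          rfl
        have hkk : k = k' := by
          have e1 : ((m.map W).flatten).takeWhile e2
              = List.replicate k 2 ++ (W h).takeWhile e2 := by
            rw [hfW, List.takeWhile_append_of_pos (hrep k), tw_stop _ _ hWh]
          have e2' : ((m'.map W).flatten).takeWhile e2
              = List.replicate k' 2 ++ (W h).takeWhile e2 := by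
            rw [hfW', List.takeWhile_append_of_pos (hrep k'), tw_stop _ _ hWh]
          have e3 := e1.symm.trans (by rw [hf, e2'] : ((m.map W).flatten).takeWhile e2
              = List.replicate k' 2 ++ (W h).takeWhile e2)
          have := congrArg List.length e3
          simp only [List.length_append, List.length_replicate] at this
          omega
        rw [hfW, hfW', hkk] at hf
        have hf2 : (r.map W).flatten = (r'.map W).flatten :=
          List.append_cancel_left (List.append_cancel_left hf)
        have hrlen : r.length ≤ n := by
          have := congrArg List.length hm
          simp only [List.length_append, List.length_replicate, List.length_cons] at this
          omega
        have := ihn r r' hrlen hf2 hfilr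
        rw [hm, hm', hkk, this]


lemma code_lemma (a b : ℤ) (W : Fin 3 → List (Fin 3)) (hW2 : W 2 = [2])
    (hsign : wt a b (W 0) * wt a b (W 1) < 0) :
    ∀ m m' : List (Fin 3), (m.map W).flatten = (m'.map W).flatten → m = m' := by
  intro m m' hf
  have wt_nil : wt a b [] = 0 := by simp [wt]
  set P := (W 0).filter (fun i => i ≠ 2) with hPdef
  set Q := (W 1).filter (fun i => i ≠ 2) with hQdef
  have hwP : wt a b P = wt a b (W 0) := wt_filter a b (W 0)
  have hwQ : wt a b Q = wt a b (W 1) := wt_filter a b (W 1)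
  have hP : P ≠ [] := by
    intro h
    rw [h, wt_nil] at hwP
    rw [← hwP] at hsign
    simp at hsign
  have hQ : Q ≠ [] := by
    intro h
    rw [h, wt_nil] at hwQ
    rw [← hwQ] at hsign
    simp at hsign
  have hPQ : P ≠ Q := by
    intro h
    rw [h, hwQ] at hwP
    rw [← hwP] at hsign
    nlinarith [sq_nonneg (wt a b (W 1))]
  -- filter the flatten equation
  set g : Fin 3 → List (Fin 3) := fun i => (W i).filter (fun j => j ≠ 2) with hg
  have hg2 : g 2 = [] := by rw [hg]; simp [hW2]
  have hfil : ((m.map g).flatten) = ((m'.map g).flatten) := by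
    have := congrArg (List.filter (fun i => i ≠ 2)) hf
    rw [List.filter_flatten, List.filter_flatten, List.map_map, List.map_map] at this
    exact this
  have drop2 : ∀ u : List (Fin 3),
      (u.map g).flatten = ((u.filter (fun i => i ≠ 2)).map g).flatten := by
    intro u
    induction u with
    | nil => rfl
    | cons c t ih =>
      by_cases hc : c = 2
      · subst hc
        simp only [List.map_cons, List.flatten_cons, hg2, List.nil_append, ih,
          List.filter_cons]
        simp
      · simp only [List.map_cons, List.flatten_cons, List.filter_cons]
        rw [if_pos (by simpa using hc)]
        simp only [List.map_cons, List.flatten_cons, ih]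
  rw [drop2 m, drop2 m'] at hfil
  -- blocks of the filtered lists are P or Q
  have hblocks : ∀ u : List (Fin 3),
      ∀ c ∈ (u.filter (fun i => i ≠ 2)).map g, c = P ∨ c = Q := by
    intro u c hc
    rw [List.mem_map] at hc
    obtain ⟨i, hi, rfl⟩ := hc
    have hi2 : i ≠ 2 := by
      have := List.of_mem_filter hi
      simpa using this
    rcases fin3_cases i with rfl | rfl | rfl
    · exact Or.inl rfl
    · exact Or.inr rfl
    · exact absurd rfl hi2
  rcases two_code (P.length + Q.length) P Q le_rfl hP hQ _ _ (hblocks m) (hblocks m') hfil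
    with heq | hcomm
  · -- decode the equal block sequences
    have gInj : ∀ u u' : List (Fin 3), (∀ i ∈ u, i ≠ 2) → (∀ i ∈ u', i ≠ 2) →
        u.map g = u'.map g → u = u' := by
      intro u
      induction u with
      | nil =>
        intro u' _ _ hm
        cases u' with
        | nil => rfl
        | cons c t => simp at hm
      | cons c t ih =>
        intro u' hu hu' hm
        cases u' with
        | nil => simp at hm
        | cons c' t' =>
          simp only [List.map_cons, List.cons.injEq] at hm
          have hc2 : c ≠ 2 := hu c (List.mem_cons_self)
          have hc2' : c' ≠ 2 := hu' c' (List.mem_cons_self)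
          have hcc : c = c' := by
            rcases fin3_cases c with rfl | rfl | rfl <;>
              rcases fin3_cases c' with rfl | rfl | rfl <;>
                first
                  | rfl
                  | (exact absurd rfl hc2)
                  | (exact absurd rfl hc2')
                  | (exact absurd hm.1 hPQ)
                  | (exact absurd hm.1.symm hPQ)
          rw [hcc, ih t' (fun i hi => hu i (List.mem_cons_of_mem _ hi))
            (fun i hi => hu' i (List.mem_cons_of_mem _ hi)) hm.2]
    have hfeq : m.filter (fun i => i ≠ 2) = m'.filter (fun i => i ≠ 2) := by
      apply gInj
      · intro i hi; simpa using List.of_mem_filter hi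
      · intro i hi; simpa using List.of_mem_filter hi
      · exact heq
    -- alignment
    have h0 : ∀ i : Fin 3, i ≠ 2 → ∃ x ∈ W i, x ≠ 2 := by
      intro i hi
      rcases fin3_cases i with rfl | rfl | rfl
      · rcases List.exists_mem_of_ne_nil P hP with ⟨x, hx⟩
        exact ⟨x, List.mem_of_mem_filter hx, by simpa using List.of_mem_filter hx⟩
      · rcases List.exists_mem_of_ne_nil Q hQ with ⟨x, hx⟩
        exact ⟨x, List.mem_of_mem_filter hx, by simpa using List.of_mem_filter hx⟩
      · exact absurd rfl hi
    exact align W hW2 h0 m.length m m' le_rfl hf hfeq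
  · -- commuting case is impossible for weight reasons
    exfalso
    have h1 := comm_wt (wt a b) (wt_append a b) (P.length + Q.length) P Q le_rfl hcomm
    rw [hwP, hwQ] at h1
    have hlP : (0:ℤ) < P.length := by
      have : P.length ≠ 0 := by simpa [List.length_eq_zero_iff] using hP
      exact_mod_cast Nat.pos_of_ne_zero this
    have hlQ : (0:ℤ) < Q.length := by
      have : Q.length ≠ 0 := by simpa [List.length_eq_zero_iff] using hQ
      exact_mod_cast Nat.pos_of_ne_zero this
    have key : (0:ℤ) ≤ (wt a b (W 0) * Q.length) * (wt a b (W 1) * P.length) := by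
      rw [← h1]
      exact mul_self_nonneg _
    have expand : (wt a b (W 0) * (Q.length:ℤ)) * (wt a b (W 1) * P.length)
        = (wt a b (W 0) * wt a b (W 1)) * ((P.length : ℤ) * Q.length) := by ring
    have hneg : (wt a b (W 0) * wt a b (W 1)) * ((P.length : ℤ) * Q.length) < 0 :=
      mul_neg_of_neg_of_pos hsign (mul_pos hlP hlQ)
    rw [expand] at key
    linarith

end Fin3

section Order

def nval : List (Fin 3) → ℕ
  | [] => 0
  | i :: t => i.val * 3 ^ t.length + nval t

lemma nval_nil : nval [] = 0 := rfl
lemma nval_cons (i : Fin 3) (t : List (Fin 3)) :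
    nval (i :: t) = i.val * 3 ^ t.length + nval t := rfl

lemma nval_lt : ∀ l : List (Fin 3), nval l < 3 ^ l.length
  | [] => by simp [nval_nil]
  | i :: t => by
    have h1 : nval t < 3 ^ t.length := nval_lt t
    have hi : i.val ≤ 2 := Nat.lt_succ_iff.mp i.isLt
    have hp : 0 < 3 ^ t.length := Nat.pow_pos (by norm_num)
    rw [nval_cons]
    have : i.val * 3 ^ t.length ≤ 2 * 3 ^ t.length :=
      Nat.mul_le_mul_right _ hi
    calc i.val * 3 ^ t.length + nval t ≤ 2 * 3 ^ t.length + nval t := by omega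
      _ < 2 * 3 ^ t.length + 3 ^ t.length := by omega
      _ = 3 ^ (t.length + 1) := by ring
      _ = 3 ^ (i :: t).length := by rw [List.length_cons]

lemma nval_append : ∀ u v : List (Fin 3), nval (u ++ v) = nval u * 3 ^ v.length + nval v
  | [], v => by simp [nval_nil]
  | i :: t, v => by
    rw [List.cons_append, nval_cons, nval_cons, nval_append t v, List.length_append,
      pow_add]
    ring

lemma nval_inj : ∀ u v : List (Fin 3), u.length = v.length → nval u = nval v → u = v
  | [], [], _, _ => rfl
  | [], i :: t, h, _ => by simp at h
  | i :: t, [], h, _ => by simp at h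
  | i :: t, j :: s, h, hv => by
    have hl : t.length = s.length := by simpa using h
    have h1 : nval t < 3 ^ t.length := nval_lt t
    have h2 : nval s < 3 ^ s.length := nval_lt s
    rw [nval_cons, nval_cons, hl, Nat.mul_comm (i.val), Nat.mul_comm (j.val)] at hv
    rw [hl] at h1
    have hmod := congrArg (· % (3 ^ s.length)) hv
    simp only [Nat.mul_add_mod, Nat.mod_eq_of_lt h1, Nat.mod_eq_of_lt h2] at hmod
    have hts : nval t = nval s := hmod
    have hij : i = j := by
      rw [hts] at hv
      have := Nat.add_right_cancel hv
      have hval : i.val = j.val :=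
        Nat.eq_of_mul_eq_mul_left (Nat.pow_pos (by norm_num)) this
      exact Fin.ext hval
    rw [hij, nval_inj t s hl hts]

/-- the ordering key : (length, base-3 value), lexicographic -/
def wkey (w : FreeMonoid (Fin 3)) : ℕ ×ₗ ℕ :=
  toLex ((FreeMonoid.toList w).length, nval (FreeMonoid.toList w))

lemma wkey_inj : Function.Injective wkey := by
  intro u v h
  have h' : ((FreeMonoid.toList u).length, nval (FreeMonoid.toList u))
      = ((FreeMonoid.toList v).length, nval (FreeMonoid.toList v)) := h
  rw [Prod.mk.injEq] at h'
  have := nval_inj _ _ h'.1 h'.2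
  exact FreeMonoid.toList.injective this

instance wordLO : LinearOrder (FreeMonoid (Fin 3)) := LinearOrder.lift' wkey wkey_inj

lemma wle_iff (u v : FreeMonoid (Fin 3)) : u ≤ v ↔ wkey u ≤ wkey v := Iff.rfl

lemma wlt_iff (u v : FreeMonoid (Fin 3)) : u < v ↔ wkey u < wkey v := by
  rw [lt_iff_le_not_ge, lt_iff_le_not_ge, wle_iff, wle_iff]

lemma wkey_lt_iff (u v : FreeMonoid (Fin 3)) : wkey u < wkey v ↔
    (FreeMonoid.toList u).length < (FreeMonoid.toList v).length ∨
    ((FreeMonoid.toList u).length = (FreeMonoid.toList v).length ∧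
      nval (FreeMonoid.toList u) < nval (FreeMonoid.toList v)) :=
  Prod.Lex.lt_iff

lemma toList_mul' (u v : FreeMonoid (Fin 3)) :
    FreeMonoid.toList (u * v) = FreeMonoid.toList u ++ FreeMonoid.toList v := rfl

lemma wmul_lt_right {u v : FreeMonoid (Fin 3)} (h : u < v) (w : FreeMonoid (Fin 3)) :
    u * w < v * w := by
  rw [wlt_iff, wkey_lt_iff] at h ⊢
  rw [toList_mul', toList_mul', List.length_append, List.length_append,
    nval_append, nval_append]
  rcases h with h | ⟨h1, h2⟩
  · exact Or.inl (by omega)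
  · refine Or.inr ⟨by omega, ?_⟩
    have := (Nat.mul_lt_mul_right (Nat.pow_pos (n := (FreeMonoid.toList w).length)
      (by norm_num : 0 < 3))).mpr h2
    omega

lemma wmul_lt_left {u v : FreeMonoid (Fin 3)} (h : u < v) (w : FreeMonoid (Fin 3)) :
    w * u < w * v := by
  rw [wlt_iff, wkey_lt_iff] at h ⊢
  rw [toList_mul', toList_mul', List.length_append, List.length_append,
    nval_append, nval_append]
  rcases h with h | ⟨h1, h2⟩
  · exact Or.inl (by omega)
  · rw [h1]
    exact Or.inr ⟨by omega, by omega⟩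

lemma wmul_le_right {u v : FreeMonoid (Fin 3)} (h : u ≤ v) (w : FreeMonoid (Fin 3)) :
    u * w ≤ v * w := by
  rcases eq_or_lt_of_le h with rfl | h
  · exact le_rfl
  · exact le_of_lt (wmul_lt_right h w)

lemma wmul_le_left {u v : FreeMonoid (Fin 3)} (h : u ≤ v) (w : FreeMonoid (Fin 3)) :
    w * u ≤ w * v := by
  rcases eq_or_lt_of_le h with rfl | h
  · exact le_rfl
  · exact le_of_lt (wmul_lt_left h w)

lemma wmul_le_mul {u v u' v' : FreeMonoid (Fin 3)} (h : u ≤ v) (h' : u' ≤ v') :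
    u * u' ≤ v * v' :=
  le_trans (wmul_le_right h u') (wmul_le_left h' v)

end Order

section Algebra

variable {K : Type} [Field K]

/-- `u` is the maximum of the support of `f`, with nonzero coefficient. -/
def IsTop (f : FA K) (u : FreeMonoid (Fin 3)) : Prop :=
  f.coeff u ≠ 0 ∧ ∀ w ∈ f.coeff.support, w ≤ u

lemma isTop_one : IsTop (1 : FA K) 1 := by
  constructor
  · rw [MonoidAlgebra.one_def, MonoidAlgebra.coeff_single_apply, if_pos rfl]
    exact one_ne_zero
  · intro w hw
    rw [MonoidAlgebra.one_def, MonoidAlgebra.coeff_single] at hw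
    have := Finsupp.support_single_subset hw
    rw [Finset.mem_singleton] at this
    exact le_of_eq this

lemma isTop_single (u : FreeMonoid (Fin 3)) : IsTop (MonoidAlgebra.single u (1:K)) u := by
  constructor
  · rw [MonoidAlgebra.coeff_single_apply, if_pos rfl]; exact one_ne_zero
  · intro w hw
    have := Finsupp.support_single_subset (by simpa only [MonoidAlgebra.coeff_single] using hw)
    rw [Finset.mem_singleton] at this
    exact le_of_eq this

lemma isTop_mul {f g : FA K} {u v : FreeMonoid (Fin 3)}
    (hf : IsTop f u) (hg : IsTop g v) : IsTop (f * g) (u * v) := by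
  classical
  have hcoeff : (f * g).coeff (u * v) = f.coeff u * g.coeff v := by
    rw [MonoidAlgebra.coeff_mul]
    have step1 : (f.coeff.sum fun a₁ b₁ => g.coeff.sum fun a₂ b₂ =>
        if a₁ * a₂ = u * v then b₁ * b₂ else 0)
        = ∑ a₁ ∈ f.coeff.support, ∑ a₂ ∈ g.coeff.support,
            if a₁ * a₂ = u * v then f.coeff a₁ * g.coeff a₂ else 0 := rfl
    rw [step1]
    rw [Finset.sum_eq_single u]
    · rw [Finset.sum_eq_single v]
      · rw [if_pos rfl]
      · intro a₂ ha₂ hne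
        rw [if_neg]
        exact ne_of_lt (wmul_lt_left (lt_of_le_of_ne (hg.2 a₂ ha₂) hne) u)
      · intro hv
        rw [if_pos rfl, Finsupp.notMem_support_iff.mp hv, mul_zero]
    · intro a₁ ha₁ hne
      apply Finset.sum_eq_zero
      intro a₂ ha₂
      rw [if_neg]
      have h1 : a₁ * a₂ < u * a₂ := wmul_lt_right (lt_of_le_of_ne (hf.2 a₁ ha₁) hne) a₂
      have h2 : u * a₂ ≤ u * v := wmul_le_left (hg.2 a₂ ha₂) u
      exact ne_of_lt (lt_of_lt_of_le h1 h2)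
    · intro hu
      apply Finset.sum_eq_zero
      intro a₂ _
      rw [Finsupp.notMem_support_iff.mp hu, zero_mul]
      simp
  refine ⟨by rw [hcoeff]; exact mul_ne_zero hf.1 hg.1, ?_⟩
  intro w hw
  classical
  have := MonoidAlgebra.support_coeff_mul_subset f g hw
  rw [Finset.mem_mul] at this
  obtain ⟨p, hp, q, hq, rfl⟩ := this
  exact wmul_le_mul (hf.2 p hp) (hg.2 q hq)

lemma isTop_lift (F : Fin 3 → FA K) (W : Fin 3 → FreeMonoid (Fin 3))
    (h : ∀ i, IsTop (F i) (W i)) :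
    ∀ m : FreeMonoid (Fin 3), IsTop (FreeMonoid.lift F m) (FreeMonoid.lift W m) := by
  intro m
  induction m using FreeMonoid.recOn with
  | one => simpa only [map_one] using (isTop_one : IsTop (1 : FA K) 1)
  | of_mul i t iht =>
    rw [map_mul, map_mul, FreeMonoid.lift_eval_of, FreeMonoid.lift_eval_of]
    exact isTop_mul (h i) iht

lemma subst_ne_zero {F : Fin 3 → FA K} {W : Fin 3 → FreeMonoid (Fin 3)}
    (htop : ∀ i, IsTop (F i) (W i))
    (hinj : Function.Injective (⇑(FreeMonoid.lift W) : FreeMonoid (Fin 3) → FreeMonoid (Fin 3)))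
    {v : FA K} (hv : v ≠ 0) : subst K F v ≠ 0 := by
  classical
  have hsupp : v.coeff.support.Nonempty := Finsupp.support_nonempty_iff.mpr (MonoidAlgebra.coeff_eq_zero.not.mpr hv)
  have himg : (v.coeff.support.image (⇑(FreeMonoid.lift W))).Nonempty := hsupp.image _
  obtain ⟨m₀, hm₀, hm₀T⟩ := Finset.mem_image.mp
    ((v.coeff.support.image (⇑(FreeMonoid.lift W))).max'_mem himg)
  set T := (v.coeff.support.image (⇑(FreeMonoid.lift W))).max' himg with hT
  intro h0
  have hcoeff : (subst K F v).coeff T = v.coeff m₀ * (FreeMonoid.lift F m₀).coeff T := by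
    show ((MonoidAlgebra.lift K (FA K) (FreeMonoid (Fin 3))) (FreeMonoid.lift F) v).coeff T = _
    rw [MonoidAlgebra.lift_apply, Finsupp.sum, MonoidAlgebra.coeff_sum, Finsupp.finset_sum_apply]
    rw [Finset.sum_eq_single m₀]
    · rw [MonoidAlgebra.coeff_smul_apply, smul_eq_mul]
    · intro m hm hne
      have hT' : (FreeMonoid.lift F m).coeff T = 0 := by
        by_contra hmem
        have h1 : T ≤ FreeMonoid.lift W m :=
          (isTop_lift F W htop m).2 T (Finsupp.mem_support_iff.mpr hmem)
        have h2 : FreeMonoid.lift W m ≤ T :=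
          Finset.le_max' _ _ (Finset.mem_image_of_mem _ hm)
        have heq : FreeMonoid.lift W m = FreeMonoid.lift W m₀ :=
          (le_antisymm h2 h1).trans hm₀T.symm
        exact hne (hinj heq)
      rw [MonoidAlgebra.coeff_smul_apply, hT', smul_zero]
    · intro hne
      exact absurd hm₀ hne
  rw [h0] at hcoeff
  have hΦ : (FreeMonoid.lift F m₀).coeff T ≠ 0 := by
    rw [← hm₀T]
    exact (isTop_lift F W htop m₀).1
  exact (mul_ne_zero (Finsupp.mem_support_iff.mp hm₀) hΦ)
    (by rw [← hcoeff]; simp)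

end Algebra
end ZZ


/-- Let `(a,b) ≠ (0,0)` be a pair of integers and let `f₁, f₂ ∈ K⟨x,y,z⟩` be nonzero and
bihomogeneous with respect to the `(a,b)`-degree, of `(a,b)`-degrees `d₁` and `d₂`.  If
`f₁` and `f₂` are algebraically dependent over `z` (some nonzero `v(u₁,u₂,z)` vanishes
under `u₁ ↦ f₁`, `u₂ ↦ f₂`, `z ↦ z`), then `d₁` and `d₂` are both nonnegative or both
nonpositive. -/
theorem abDeg_same_sign_of_algebraically_dependent (a b : ℤ) (hab : ¬ (a = 0 ∧ b = 0))
    (f₁ f₂ : FA K) (hf₁ : f₁ ≠ 0) (hf₂ : f₂ ≠ 0) (d₁ d₂ : ℤ)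
    (h₁ : ∀ w ∈ f₁.coeff.support, abDeg a b w = d₁)
    (h₂ : ∀ w ∈ f₂.coeff.support, abDeg a b w = d₂)
    (hdep : ∃ v : FA K, v ≠ 0 ∧ subst K ![f₁, f₂, Xv K 2] v = 0) :
    (0 ≤ d₁ ∧ 0 ≤ d₂) ∨ (d₁ ≤ 0 ∧ d₂ ≤ 0) := by
  classical
  by_contra hcon
  obtain ⟨v, hv, hsub⟩ := hdep
  have h₁ne : f₁.coeff.support.Nonempty := Finsupp.support_nonempty_iff.mpr (MonoidAlgebra.coeff_eq_zero.not.mpr hf₁)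
  have h₂ne : f₂.coeff.support.Nonempty := Finsupp.support_nonempty_iff.mpr (MonoidAlgebra.coeff_eq_zero.not.mpr hf₂)
  set L₁ := f₁.coeff.support.max' h₁ne with hL₁
  set L₂ := f₂.coeff.support.max' h₂ne with hL₂
  have hL₁mem : L₁ ∈ f₁.coeff.support := f₁.coeff.support.max'_mem h₁ne
  have hL₂mem : L₂ ∈ f₂.coeff.support := f₂.coeff.support.max'_mem h₂ne
  set Wf : Fin 3 → FreeMonoid (Fin 3) := ![L₁, L₂, FreeMonoid.of 2] with hWf
  have htop : ∀ i, ZZ.IsTop (![f₁, f₂, Xv K 2] i) (Wf i) := by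
    intro i
    rcases ZZ.fin3_cases i with rfl | rfl | rfl
    · exact ⟨Finsupp.mem_support_iff.mp hL₁mem, fun w hw => f₁.coeff.support.le_max' w hw⟩
    · exact ⟨Finsupp.mem_support_iff.mp hL₂mem, fun w hw => f₂.coeff.support.le_max' w hw⟩
    · show ZZ.IsTop (Xv K 2) (FreeMonoid.of 2)
      rw [Xv, MonoidAlgebra.of_apply]
      exact ZZ.isTop_single _
  have hd₁ : ZZ.wt a b (FreeMonoid.toList L₁) = d₁ := h₁ L₁ hL₁mem
  have hd₂ : ZZ.wt a b (FreeMonoid.toList L₂) = d₂ := h₂ L₂ hL₂mem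
  have hcase : (0 < d₁ ∧ d₂ < 0) ∨ (d₁ < 0 ∧ 0 < d₂) := by omega
  have hsign : d₁ * d₂ < 0 := by
    rcases hcase with ⟨hp, hn⟩ | ⟨hn, hp⟩
    · exact mul_neg_of_pos_of_neg hp hn
    · exact mul_neg_of_neg_of_pos hn hp
  have hlift : ∀ m : FreeMonoid (Fin 3), FreeMonoid.toList (FreeMonoid.lift Wf m)
      = ((FreeMonoid.toList m).map fun i => FreeMonoid.toList (Wf i)).flatten := by
    intro m
    rw [FreeMonoid.lift_apply, FreeMonoid.toList_prod, List.map_map]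
    rfl
  have hinj : Function.Injective
      (⇑(FreeMonoid.lift Wf) : FreeMonoid (Fin 3) → FreeMonoid (Fin 3)) := by
    intro m m' hmm
    apply FreeMonoid.toList.injective
    apply ZZ.code_lemma a b (fun i => FreeMonoid.toList (Wf i)) rfl
    · show ZZ.wt a b (FreeMonoid.toList (Wf 0)) * ZZ.wt a b (FreeMonoid.toList (Wf 1)) < 0
      have e0 : ZZ.wt a b (FreeMonoid.toList (Wf 0)) = d₁ := hd₁
      have e1 : ZZ.wt a b (FreeMonoid.toList (Wf 1)) = d₂ := hd₂
      rw [e0, e1]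
      exact hsign
    · rw [← hlift, ← hlift, hmm]
  exact ZZ.subst_ne_zero htop hinj hv hsub
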